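/- For any B ∈ L²(P) with Bσ integrable, set R := E[Bσ | 𝒱]. Then (assuming the displayed quantities lie in L²(P)) the element (R − T⁻¹·E[RW | ℋ])·W·σ belongs to Λᗮ, and B − (R − T⁻¹·E[RW | ℋ])·W·σ is orthogonal in L²(P) to every element of Λᗮ; that is, (R − T⁻¹·E[RW | ℋ])·W·σ is the orthogonal projection of B onto Λᗮ. -/

import Mathlib

open MeasureTheory

variable {Ω : Type*}

/-- `W := (E[σ² | 𝒱])⁻¹`. -/
noncomputable def Wfun {m0 : MeasurableSpace Ω} (μ : Measure Ω) (mV : MeasurableSpace Ω)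
    (σ : Ω → ℝ) : Ω → ℝ :=
  fun ω => ((μ[(fun ω' => (σ ω')^2)|mV]) ω)⁻¹

/-- `T := E[W | ℋ]`. -/
noncomputable def Tfun {m0 : MeasurableSpace Ω} (μ : Measure Ω)
    (mV mH : MeasurableSpace Ω) (σ : Ω → ℝ) : Ω → ℝ :=
  μ[Wfun μ mV σ|mH]

/-- `Λᗮ = {d·σ : d 𝒱-measurable, E[d | ℋ] = 0 a.s., d·σ ∈ L²}`. -/
def LambdaPerp {m0 : MeasurableSpace Ω} (μ : Measure Ω)
    (mV mH : MeasurableSpace Ω) (σ : Ω → ℝ) : Set (Ω → ℝ) :=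
  {f | ∃ d : Ω → ℝ, StronglyMeasurable[mV] d ∧ μ[d|mH] =ᵐ[μ] 0 ∧
    f = (fun ω => d ω * σ ω) ∧ MemLp f 2 μ}

/-- `R := E[Bσ | 𝒱]`. -/
noncomputable def Rfun {m0 : MeasurableSpace Ω} (μ : Measure Ω)
    (mV : MeasurableSpace Ω) (σ B : Ω → ℝ) : Ω → ℝ :=
  μ[(fun ω => B ω * σ ω)|mV]

private lemma integrable_mul_of_memL2 {m0 : MeasurableSpace Ω} {μ : Measure Ω} {f g : Ω → ℝ}
    (hf : MemLp f 2 μ) (hg : MemLp g 2 μ) : Integrable (fun ω => f ω * g ω) μ := by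
  have h : MemLp (f • g) 1 μ := hg.smul hf (hpqr := ⟨by simp [one_div, ENNReal.inv_two_add_inv_two]⟩)
  rw [memLp_one_iff_integrable] at h
  exact h

theorem projection_onto_LambdaPerp
    {m0 : MeasurableSpace Ω} (μ : Measure Ω) [IsProbabilityMeasure μ]
    (mH mV : MeasurableSpace Ω) (hHV : mH ≤ mV) (hV : mV ≤ m0)
    (σ : Ω → ℝ) (hσ2 : MemLp σ 2 μ)
    (hσcond : μ[σ|mV] =ᵐ[μ] 0)
    (hσvar : ∀ᵐ ω ∂μ, 0 < (μ[(fun ω' => (σ ω')^2)|mV]) ω)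
    (hWint : Integrable (Wfun μ mV σ) μ)
    (hTpos : ∀ᵐ ω ∂μ, 0 < Tfun μ mV mH σ ω)
    (B : Ω → ℝ) (hB2 : MemLp B 2 μ)
    (hBσInt : Integrable (fun ω => B ω * σ ω) μ)
    (hRWInt : Integrable (fun ω => Rfun μ mV σ B ω * Wfun μ mV σ ω) μ)
    (hdInt : Integrable (fun ω => (Rfun μ mV σ B ω - (Tfun μ mV mH σ ω)⁻¹ *
      (μ[(fun ω' => Rfun μ mV σ B ω' * Wfun μ mV σ ω')|mH]) ω) * Wfun μ mV σ ω) μ)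
    (hprojL2 : MemLp (fun ω => (Rfun μ mV σ B ω - (Tfun μ mV mH σ ω)⁻¹ *
      (μ[(fun ω' => Rfun μ mV σ B ω' * Wfun μ mV σ ω')|mH]) ω) *
      Wfun μ mV σ ω * σ ω) 2 μ) :
    (fun ω => (Rfun μ mV σ B ω - (Tfun μ mV mH σ ω)⁻¹ *
        (μ[(fun ω' => Rfun μ mV σ B ω' * Wfun μ mV σ ω')|mH]) ω) *
        Wfun μ mV σ ω * σ ω) ∈ LambdaPerp μ mV mH σ ∧
      ∀ f ∈ LambdaPerp μ mV mH σ,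
        ∫ ω, (B ω - (Rfun μ mV σ B ω - (Tfun μ mV mH σ ω)⁻¹ *
          (μ[(fun ω' => Rfun μ mV σ B ω' * Wfun μ mV σ ω')|mH]) ω) *
          Wfun μ mV σ ω * σ ω) * f ω ∂μ = 0 := by
  have hH : mH ≤ m0 := hHV.trans hV
  set W := Wfun μ mV σ with hWdef
  set T := Tfun μ mV mH σ with hTdef
  set R := Rfun μ mV σ B with hRdef
  set C : Ω → ℝ := μ[(fun ω' => R ω' * W ω')|mH] with hCdef
  set d₀ : Ω → ℝ := fun ω => (R ω - (T ω)⁻¹ * C ω) * W ω with hd₀def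
  -- basic measurability
  have hRmeas : StronglyMeasurable[mV] R := stronglyMeasurable_condExp
  have hWmeas : StronglyMeasurable[mV] W :=
    (stronglyMeasurable_condExp (f := fun ω' => (σ ω')^2) (m := mV)).measurable.inv.stronglyMeasurable
  have hTmeasH : StronglyMeasurable[mH] T := stronglyMeasurable_condExp
  have hCmeasH : StronglyMeasurable[mH] C := stronglyMeasurable_condExp
  have hcH : StronglyMeasurable[mH] (fun ω => (T ω)⁻¹ * C ω) :=
    (hTmeasH.measurable.inv.mul hCmeasH.measurable).stronglyMeasurable
  have hd₀meas : StronglyMeasurable[mV] d₀ :=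
    ((hRmeas.measurable.sub ((hcH.mono hHV).measurable)).mul hWmeas.measurable).stronglyMeasurable
  have hWpos : ∀ᵐ ω ∂μ, 0 < W ω := by
    filter_upwards [hσvar] with ω h
    exact inv_pos.mpr h
  have hσ2sq : Integrable (fun ω => (σ ω)^2) μ := hσ2.integrable_sq
  -- integrability of (T⁻¹ C) * W
  have hInt2 : Integrable (fun ω => ((T ω)⁻¹ * C ω) * W ω) μ := by
    refine (hRWInt.sub hdInt).congr ?_
    exact Filter.Eventually.of_forall fun ω => by simp only [Pi.sub_apply]; ring
  -- E[d₀ | H] = 0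
  have hcond0 : μ[d₀|mH] =ᵐ[μ] 0 := by
    have e1 : μ[d₀|mH] =ᵐ[μ]
        μ[(fun ω => R ω * W ω)|mH] - μ[(fun ω => ((T ω)⁻¹ * C ω) * W ω)|mH] := by
      refine (condExp_congr_ae (Filter.Eventually.of_forall fun ω => ?_)).trans
        (condExp_sub hRWInt hInt2 mH)
      show d₀ ω = R ω * W ω - ((T ω)⁻¹ * C ω) * W ω
      rw [hd₀def]; ring
    have e2 : μ[(fun ω => ((T ω)⁻¹ * C ω) * W ω)|mH] =ᵐ[μ]
        (fun ω => (T ω)⁻¹ * C ω) * μ[W|mH] :=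
      condExp_mul_of_stronglyMeasurable_left hcH hInt2 hWint
    filter_upwards [e1, e2, hTpos] with ω h1 h2 h3
    have hTC : (μ[W|mH]) ω = T ω := rfl
    simp only [Pi.sub_apply, Pi.mul_apply, hTC] at h1 h2
    rw [h1, h2]
    field_simp
    exact sub_self _
  refine ⟨⟨fun ω => (R ω - (T ω)⁻¹ * C ω) * W ω, hd₀meas, hcond0, rfl, hprojL2⟩, ?_⟩
  -- orthogonality
  rintro f ⟨d, hdmeas, hd0, rfl, hf2⟩
  show ∫ ω, (B ω - d₀ ω * σ ω) * (d ω * σ ω) ∂μ = 0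
  -- d is integrable
  have hd2σ2 : Integrable (fun ω => (d ω)^2 * (σ ω)^2) μ := by
    refine hf2.integrable_sq.congr (Filter.Eventually.of_forall fun ω => ?_)
    simp only []; ring
  have hd2meas : StronglyMeasurable[mV] (fun ω => (d ω)^2) :=
    (hdmeas.measurable.pow_const 2).stronglyMeasurable
  have pull1 : μ[(fun ω => (d ω)^2 * (σ ω)^2)|mV] =ᵐ[μ]
      (fun ω => (d ω)^2) * μ[(fun ω => (σ ω)^2)|mV] :=
    condExp_mul_of_stronglyMeasurable_left hd2meas hd2σ2 hσ2sq
  have hd2W : Integrable (fun ω => (d ω)^2 * (W ω)⁻¹) μ := by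
    refine (integrable_condExp (f := fun ω => (d ω)^2 * (σ ω)^2) (m := mV)).congr ?_
    filter_upwards [pull1] with ω h
    rw [h]
    simp only [Pi.mul_apply, hWdef, Wfun, inv_inv]
  have hdInt' : Integrable d μ := by
    refine Integrable.mono' ((hd2W.add hWint).div_const 2)
      ((hdmeas.mono hV).aestronglyMeasurable) ?_
    filter_upwards [hWpos] with ω hw
    rw [Real.norm_eq_abs]
    simp only [Pi.add_apply]
    nlinarith [sq_nonneg (|d ω| - W ω), sq_abs (d ω), mul_inv_cancel₀ (ne_of_gt hw),
      inv_nonneg.mpr hw.le, abs_nonneg (d ω), hw.le]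
  -- integrability facts for the integral computation
  have hproj_sub : MemLp (fun ω => B ω - d₀ ω * σ ω) 2 μ := hB2.sub hprojL2
  have hGint : Integrable (fun ω => (B ω - d₀ ω * σ ω) * (d ω * σ ω)) μ :=
    integrable_mul_of_memL2 hproj_sub hf2
  have hd₀σ2 : Integrable (fun ω => d₀ ω * (σ ω)^2) μ := by
    refine (integrable_mul_of_memL2 hprojL2 hσ2).congr (Filter.Eventually.of_forall fun ω => ?_)
    simp only []; ring
  have hinner_int : Integrable (fun ω => (B ω - d₀ ω * σ ω) * σ ω) μ := by
    refine (hBσInt.sub hd₀σ2).congr (Filter.Eventually.of_forall fun ω => ?_)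
    simp only [Pi.sub_apply]; ring
  -- conditional expectation computations
  have pullV : μ[(fun ω => d ω * ((B ω - d₀ ω * σ ω) * σ ω))|mV] =ᵐ[μ]
      d * μ[(fun ω => (B ω - d₀ ω * σ ω) * σ ω)|mV] :=
    condExp_mul_of_stronglyMeasurable_left hdmeas
      (hGint.congr (Filter.Eventually.of_forall fun ω => by simp only [Pi.mul_apply]; ring)) hinner_int
  have pulld₀ : μ[(fun ω => d₀ ω * (σ ω)^2)|mV] =ᵐ[μ]
      d₀ * μ[(fun ω => (σ ω)^2)|mV] :=
    condExp_mul_of_stronglyMeasurable_left hd₀meas hd₀σ2 hσ2sq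
  have innerV : μ[(fun ω => (B ω - d₀ ω * σ ω) * σ ω)|mV] =ᵐ[μ]
      μ[(fun ω => B ω * σ ω)|mV] - μ[(fun ω => d₀ ω * (σ ω)^2)|mV] := by
    refine (condExp_congr_ae (Filter.Eventually.of_forall fun ω => ?_)).trans
      (condExp_sub hBσInt hd₀σ2 mV)
    show (B ω - d₀ ω * σ ω) * σ ω = B ω * σ ω - d₀ ω * (σ ω)^2
    ring
  have key : μ[(fun ω => (B ω - d₀ ω * σ ω) * (d ω * σ ω))|mV] =ᵐ[μ]
      fun ω => d ω * ((T ω)⁻¹ * C ω) := by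
    have e0 : μ[(fun ω => (B ω - d₀ ω * σ ω) * (d ω * σ ω))|mV] =ᵐ[μ]
        μ[(fun ω => d ω * ((B ω - d₀ ω * σ ω) * σ ω))|mV] :=
      condExp_congr_ae (Filter.Eventually.of_forall fun ω => by ring)
    refine ((e0.trans pullV)).trans ?_
    filter_upwards [innerV, pulld₀, hσvar] with ω h1 h2 h3
    simp only [Pi.mul_apply, Pi.sub_apply] at h1 h2 ⊢
    rw [h1, h2]
    have hRω : (μ[(fun ω' => B ω' * σ ω')|mV]) ω = R ω := rfl
    have hWω : (μ[(fun ω' => (σ ω')^2)|mV]) ω = (W ω)⁻¹ := by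
      simp only [hWdef, Wfun, inv_inv]
    rw [hRω, hWω, hd₀def]
    have hWne : W ω ≠ 0 := by
      simp only [hWdef, Wfun]
      exact inv_ne_zero (ne_of_gt h3)
    field_simp
    ring
  -- finish
  have hdc_int : Integrable (fun ω => d ω * ((T ω)⁻¹ * C ω)) μ :=
    (integrable_condExp (f := fun ω => (B ω - d₀ ω * σ ω) * (d ω * σ ω)) (m := mV)).congr key
  have hcd_int : Integrable (fun ω => ((T ω)⁻¹ * C ω) * d ω) μ :=
    hdc_int.congr (Filter.Eventually.of_forall fun ω => by ring)
  have pullH : μ[(fun ω => ((T ω)⁻¹ * C ω) * d ω)|mH] =ᵐ[μ]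
      (fun ω => (T ω)⁻¹ * C ω) * μ[d|mH] :=
    condExp_mul_of_stronglyMeasurable_left hcH hcd_int hdInt'
  have hzero : μ[(fun ω => ((T ω)⁻¹ * C ω) * d ω)|mH] =ᵐ[μ] 0 := by
    filter_upwards [pullH, hd0] with ω h1 h2
    simp only [Pi.mul_apply] at h1
    rw [h1, h2]
    simp
  calc ∫ ω, (B ω - d₀ ω * σ ω) * (d ω * σ ω) ∂μ
      = ∫ ω, (μ[(fun ω => (B ω - d₀ ω * σ ω) * (d ω * σ ω))|mV]) ω ∂μ :=
        (integral_condExp hV).symm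
    _ = ∫ ω, d ω * ((T ω)⁻¹ * C ω) ∂μ := integral_congr_ae key
    _ = ∫ ω, ((T ω)⁻¹ * C ω) * d ω ∂μ :=
        integral_congr_ae (Filter.Eventually.of_forall fun ω => by ring)
    _ = ∫ ω, (μ[(fun ω => ((T ω)⁻¹ * C ω) * d ω)|mH]) ω ∂μ := (integral_condExp hH).symm
    _ = ∫ ω, (0 : Ω → ℝ) ω ∂μ := integral_congr_ae hzero
    _ = 0 := by simp
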